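/- Let μ be a probability measure on ℝ² with continuous marginal cumulative distribution functions F_X and F_Y, joint cumulative distribution function F, support S, and d_τ(x,y) := F(x,y) − (F_X(x)+F_Y(y))/2. If the absolutely continuous component of μ with respect to two-dimensional Lebesgue measure λ₂ is nonzero, then d_τ is not constant on S. -/

import Mathlib

open MeasureTheory Set
open scoped ENNReal

private lemma avg_section' {B : Set (ℝ × ℝ)} (hB : MeasurableSet B) (I : Set ℝ)
    (t : ℝ≥0∞) (h : ∀ x ∈ I, t ≤ volume (Prod.mk x ⁻¹' B)) :
    t * volume I ≤ volume B := by
  have hvol : volume B = ∫⁻ x, volume (Prod.mk x ⁻¹' B) := by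
    rw [show (volume : Measure (ℝ × ℝ)) = (volume : Measure ℝ).prod volume from
      MeasureTheory.Measure.volume_eq_prod ℝ ℝ]
    exact Measure.prod_apply hB
  rw [hvol]
  calc t * volume I = ∫⁻ _ in I, t ∂volume := (setLIntegral_const I t).symm
    _ ≤ ∫⁻ x in I, volume (Prod.mk x ⁻¹' B) ∂volume :=
        setLIntegral_mono (measurable_measure_prodMk_left hB) h
    _ ≤ ∫⁻ x, volume (Prod.mk x ⁻¹' B) := setLIntegral_le_lintegral I _

theorem stmt_12
    (μ : Measure (ℝ × ℝ)) [IsProbabilityMeasure μ]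
    (F : ℝ → ℝ → ℝ) (FX FY : ℝ → ℝ) (dτ : ℝ × ℝ → ℝ)
    (hF : ∀ x y, F x y = (μ (Iic x ×ˢ Iic y)).toReal)
    (hFX : ∀ x, FX x = (μ (Iic x ×ˢ (univ : Set ℝ))).toReal)
    (hFY : ∀ y, FY y = (μ ((univ : Set ℝ) ×ˢ Iic y)).toReal)
    (hFXcont : Continuous FX) (hFYcont : Continuous FY)
    (hdτ : ∀ p : ℝ × ℝ, dτ p = F p.1 p.2 - (FX p.1 + FY p.2) / 2)
    (S : Set (ℝ × ℝ))
    (hSclosed : IsClosed S) (hSfull : μ Sᶜ = 0)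
    (hSmin : ∀ T : Set (ℝ × ℝ), IsClosed T → μ Tᶜ = 0 → S ⊆ T)
    (μac μsing : Measure (ℝ × ℝ))
    (hdecomp : μ = μac + μsing)
    (hac : μac ≪ (volume : Measure (ℝ × ℝ)))
    (hsing : μsing ⟂ₘ (volume : Measure (ℝ × ℝ)))
    (hne : μac ≠ 0) :
    ∃ p ∈ S, ∃ q ∈ S, dτ p ≠ dτ q := by
  by_contra hcon
  push_neg at hcon
  have hSm : MeasurableSet S := hSclosed.measurableSet
  -- support positivity
  have hpos : ∀ U : Set (ℝ × ℝ), IsOpen U → (U ∩ S).Nonempty → 0 < μ U := by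
    rintro U hU ⟨p, hpU, hpS⟩
    rcases eq_or_lt_of_le (zero_le (a := μ U)) with hz | h
    · exfalso
      have hT : IsClosed (S ∩ Uᶜ) := hSclosed.inter hU.isClosed_compl
      have hTc : μ (S ∩ Uᶜ)ᶜ = 0 := by
        rw [compl_inter, compl_compl]
        refine le_antisymm ?_ zero_le
        calc μ (Sᶜ ∪ U) ≤ μ Sᶜ + μ U := measure_union_le _ _
          _ = 0 := by rw [hSfull, ← hz]; simp
      exact (hSmin _ hT hTc hpS).2 hpU
    · exact h
  -- rectangle lemma
  have hrect : ∀ x1 x2 y1 y2 : ℝ, x1 ≤ x2 → y1 ≤ y2 →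
      (x1, y1) ∈ S → (x1, y2) ∈ S → (x2, y1) ∈ S → (x2, y2) ∈ S →
      μ (Ioc x1 x2 ×ˢ Ioc y1 y2) = 0 := by
    intro x1 x2 y1 y2 hx hy h11 h12 h21 h22
    have fin : ∀ s : Set (ℝ × ℝ), μ s ≠ ⊤ := fun s => measure_ne_top μ s
    have key : ∀ Y : Set ℝ, MeasurableSet Y →
        μ (Iic x2 ×ˢ Y) = μ (Iic x1 ×ˢ Y) + μ (Ioc x1 x2 ×ˢ Y) := by
      intro Y hY
      rw [← Iic_union_Ioc_eq_Iic hx, union_prod,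
        measure_union (Set.Disjoint.set_prod_left (Iic_disjoint_Ioc le_rfl) _ _)
          (measurableSet_Ioc.prod hY)]
    have key2 : μ (Ioc x1 x2 ×ˢ Iic y2) =
        μ (Ioc x1 x2 ×ˢ Iic y1) + μ (Ioc x1 x2 ×ˢ Ioc y1 y2) := by
      rw [← Iic_union_Ioc_eq_Iic hy, prod_union,
        measure_union (Set.Disjoint.set_prod_right (Iic_disjoint_Ioc le_rfl) _ _)
          (measurableSet_Ioc.prod measurableSet_Ioc)]
    have e1 : F x2 y2 = F x1 y2 + (μ (Ioc x1 x2 ×ˢ Iic y2)).toReal := by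
      rw [hF, hF, key (Iic y2) measurableSet_Iic, ENNReal.toReal_add (fin _) (fin _)]
    have e3 : F x2 y1 = F x1 y1 + (μ (Ioc x1 x2 ×ˢ Iic y1)).toReal := by
      rw [hF, hF, key (Iic y1) measurableSet_Iic, ENNReal.toReal_add (fin _) (fin _)]
    have e2 : (μ (Ioc x1 x2 ×ˢ Iic y2)).toReal =
        (μ (Ioc x1 x2 ×ˢ Iic y1)).toReal + (μ (Ioc x1 x2 ×ˢ Ioc y1 y2)).toReal := by
      rw [key2, ENNReal.toReal_add (fin _) (fin _)]
    have r11 := hdτ (x1, y1)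
    have r12 := hdτ (x1, y2)
    have r21 := hdτ (x2, y1)
    have r22 := hdτ (x2, y2)
    simp only at r11 r12 r21 r22
    have d1 := hcon (x1, y1) h11 (x1, y2) h12
    have d2 := hcon (x1, y1) h11 (x2, y1) h21
    have d3 := hcon (x1, y1) h11 (x2, y2) h22
    have hz : (μ (Ioc x1 x2 ×ˢ Ioc y1 y2)).toReal = 0 := by linarith
    rcases (ENNReal.toReal_eq_zero_iff _).mp hz with h | h
    · exact h
    · exact absurd h (fin _)
  -- positive Lebesgue measure of S
  have hvolS : volume S ≠ 0 := by
    intro h0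
    have h1 : μac S = 0 := hac h0
    have h2 : μac Sᶜ = 0 := by
      have h3 := hSfull
      rw [hdecomp, Measure.add_apply] at h3
      exact (add_eq_zero.mp h3).1
    apply hne
    apply Measure.measure_univ_eq_zero.mp
    refine le_antisymm ?_ zero_le
    calc μac univ = μac (S ∪ Sᶜ) := by rw [union_compl_self]
      _ ≤ μac S + μac Sᶜ := measure_union_le _ _
      _ = 0 := by rw [h1, h2, add_zero]
  -- density point
  have hloc := Besicovitch.ae_tendsto_measure_inter_div (volume : Measure (ℝ × ℝ)) S
  have hres : (volume : Measure (ℝ × ℝ)).restrict S ≠ 0 := by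
    rw [Ne, Measure.restrict_eq_zero]
    exact hvolS
  haveI : Filter.NeBot (ae ((volume : Measure (ℝ × ℝ)).restrict S)) :=
    MeasureTheory.ae_neBot.mpr hres
  obtain ⟨p0, hp0S, hp0⟩ := ((ae_restrict_mem hSm).and hloc).exists
  obtain ⟨x0, y0⟩ := p0
  -- choose a good radius
  have hev : ∀ᶠ ρ in nhdsWithin (0:ℝ) (Ioi 0),
      (99/100 : ℝ≥0∞) < volume (S ∩ Metric.closedBall (x0, y0) ρ) /
        volume (Metric.closedBall (x0, y0) ρ) := by
    have : (99/100 : ℝ≥0∞) < 1 := by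
      rw [ENNReal.div_lt_iff (Or.inl (by norm_num)) (Or.inl (by norm_num))]
      norm_num
    exact hp0 (Ioi_mem_nhds this)
  obtain ⟨r, hrlt, hr0⟩ := (hev.and (eventually_mem_nhdsWithin)).exists
  rw [mem_Ioi] at hr0
  set Q : Set (ℝ × ℝ) := Icc (x0 - r) (x0 + r) ×ˢ Icc (y0 - r) (y0 + r) with hQdef
  have hQball : Metric.closedBall ((x0 : ℝ), (y0 : ℝ)) r = Q := by
    rw [← closedBall_prod_same, Real.closedBall_eq_Icc, Real.closedBall_eq_Icc]
  have hQvol : volume Q = ENNReal.ofReal (4 * r ^ 2) := by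
    rw [hQdef, Measure.volume_eq_prod, Measure.prod_prod, Real.volume_Icc, Real.volume_Icc,
      show x0 + r - (x0 - r) = 2 * r from by ring, show y0 + r - (y0 - r) = 2 * r from by ring,
      ← ENNReal.ofReal_mul (by linarith)]
    congr 1; ring
  have hQne : volume Q ≠ 0 := by
    rw [hQvol, Ne, ENNReal.ofReal_eq_zero, not_le]
    nlinarith
  have hQfin : volume Q ≠ ⊤ := by rw [hQvol]; exact ENNReal.ofReal_ne_top
  rw [hQball] at hrlt
  have hlt : (99 / 100 : ℝ≥0∞) * volume Q < volume (S ∩ Q) :=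
    (ENNReal.lt_div_iff_mul_lt (Or.inl hQne) (Or.inl hQfin)).mp hrlt
  have h99 : (99 / 100 : ℝ≥0∞) = ENNReal.ofReal (99 / 100) := by
    rw [ENNReal.ofReal_div_of_pos (by norm_num)]
    norm_num
  have hBdef : volume (Q \ S) ≤ ENNReal.ofReal (r ^ 2 / 25) := by
    have hsum := measure_diff_add_inter (μ := (volume : Measure (ℝ × ℝ))) Q hSm
    have hfinQS : volume (Q ∩ S) ≠ ⊤ :=
      ne_top_of_le_ne_top hQfin (measure_mono inter_subset_left)
    have hdiff : volume (Q \ S) = volume Q - volume (Q ∩ S) :=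
      ENNReal.eq_sub_of_add_eq hfinQS hsum
    have hQeq : volume Q = ENNReal.ofReal (r ^ 2 / 25) + (99 / 100 : ℝ≥0∞) * volume Q := by
      nth_rewrite 1 [hQvol]
      rw [hQvol, h99, ← ENNReal.ofReal_mul (by norm_num),
        ← ENNReal.ofReal_add (by positivity) (by positivity)]
      congr 1; ring
    rw [hdiff]
    nth_rewrite 1 [hQeq]
    rw [tsub_le_iff_right]
    refine add_le_add le_rfl ?_
    rw [inter_comm]
    exact hlt.le
  set B : Set (ℝ × ℝ) := Q \ S with hBd
  have hBm : MeasurableSet B := (measurableSet_Icc.prod measurableSet_Icc).diff hSm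
  have pick : ∀ I : Set ℝ, volume I = ENNReal.ofReal (2 * r / 3) →
      ∃ x ∈ I, volume (Prod.mk x ⁻¹' B) < ENNReal.ofReal (r / 10) := by
    intro I hI
    by_contra hno
    push_neg at hno
    have h1 := avg_section' hBm I _ hno
    rw [hI, ← ENNReal.ofReal_mul (by positivity)] at h1
    have hle := le_trans h1 hBdef
    rw [ENNReal.ofReal_le_ofReal_iff (by positivity)] at hle
    nlinarith
  obtain ⟨x1, hx1I, hx1⟩ := pick (Icc (x0 - r) (x0 - r / 3))
    (by rw [Real.volume_Icc]; congr 1; ring)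
  obtain ⟨x2, hx2I, hx2⟩ := pick (Icc (x0 + r / 3) (x0 + r))
    (by rw [Real.volume_Icc]; congr 1; ring)
  have picky : ∀ J : Set ℝ, volume J = ENNReal.ofReal (2 * r / 3) →
      ∃ y ∈ J, (x1, y) ∉ B ∧ (x2, y) ∉ B := by
    intro J hJ
    by_contra hno
    push_neg at hno
    have hsub : J ⊆ (Prod.mk x1 ⁻¹' B) ∪ (Prod.mk x2 ⁻¹' B) := by
      intro y hy
      by_cases h1 : (x1, y) ∈ B
      · exact Or.inl h1
      · exact Or.inr (hno y hy h1)
    have h2 := (measure_mono (μ := (volume : Measure ℝ)) hsub).trans (measure_union_le _ _)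
    rw [hJ] at h2
    have h3 : volume (Prod.mk x1 ⁻¹' B) + volume (Prod.mk x2 ⁻¹' B) <
        ENNReal.ofReal (r / 10) + ENNReal.ofReal (r / 10) := ENNReal.add_lt_add hx1 hx2
    rw [← ENNReal.ofReal_add (by positivity) (by positivity)] at h3
    have h4 := lt_of_le_of_lt h2 h3
    rw [ENNReal.ofReal_lt_ofReal_iff (by positivity)] at h4
    linarith
  obtain ⟨y1, hy1J, hy1a, hy1b⟩ := picky (Icc (y0 - r) (y0 - r / 3))
    (by rw [Real.volume_Icc]; congr 1; ring)
  obtain ⟨y2, hy2J, hy2a, hy2b⟩ := picky (Icc (y0 + r / 3) (y0 + r))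
    (by rw [Real.volume_Icc]; congr 1; ring)
  have memS : ∀ x y : ℝ, x ∈ Icc (x0 - r) (x0 + r) → y ∈ Icc (y0 - r) (y0 + r) →
      (x, y) ∉ B → (x, y) ∈ S := by
    intro x y hx hy hnB
    by_contra hS'
    exact hnB ⟨mem_prod.mpr ⟨hx, hy⟩, hS'⟩
  obtain ⟨hx1l, hx1r⟩ := hx1I
  obtain ⟨hx2l, hx2r⟩ := hx2I
  obtain ⟨hy1l, hy1r⟩ := hy1J
  obtain ⟨hy2l, hy2r⟩ := hy2J
  have c11 : (x1, y1) ∈ S :=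
    memS _ _ ⟨hx1l, by linarith⟩ ⟨hy1l, by linarith⟩ hy1a
  have c12 : (x1, y2) ∈ S :=
    memS _ _ ⟨hx1l, by linarith⟩ ⟨by linarith, hy2r⟩ hy2a
  have c21 : (x2, y1) ∈ S :=
    memS _ _ ⟨by linarith, hx2r⟩ ⟨hy1l, by linarith⟩ hy1b
  have c22 : (x2, y2) ∈ S :=
    memS _ _ ⟨by linarith, hx2r⟩ ⟨by linarith, hy2r⟩ hy2b
  have hx12 : x1 ≤ x2 := by linarith
  have hy12 : y1 ≤ y2 := by linarith
  have hrect0 := hrect x1 x2 y1 y2 hx12 hy12 c11 c12 c21 c22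
  -- a point of S inside the open middle rectangle
  have hM : ((Ioo (x0 - r / 3) (x0 + r / 3) ×ˢ Ioo (y0 - r / 3) (y0 + r / 3)) ∩ S).Nonempty := by
    by_contra hno
    rw [not_nonempty_iff_eq_empty] at hno
    have hsub : Ioo (x0 - r / 3) (x0 + r / 3) ×ˢ Ioo (y0 - r / 3) (y0 + r / 3) ⊆ B := by
      rintro ⟨a, b⟩ ⟨ha, hb⟩
      simp only [mem_Ioo] at ha hb
      refine ⟨mem_prod.mpr ⟨⟨by linarith [ha.1], by linarith [ha.2]⟩,
        ⟨by linarith [hb.1], by linarith [hb.2]⟩⟩, ?_⟩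
      intro hS'
      exact absurd hno (Nonempty.ne_empty ⟨(a, b), ⟨⟨mem_Ioo.mpr ha, mem_Ioo.mpr hb⟩, hS'⟩⟩)
    have h5 := (measure_mono hsub).trans hBdef
    rw [Measure.volume_eq_prod, Measure.prod_prod, Real.volume_Ioo, Real.volume_Ioo,
      show x0 + r / 3 - (x0 - r / 3) = 2 * r / 3 from by ring,
      show y0 + r / 3 - (y0 - r / 3) = 2 * r / 3 from by ring,
      ← ENNReal.ofReal_mul (by positivity),
      ENNReal.ofReal_le_ofReal_iff (by positivity)] at h5
    nlinarith
  obtain ⟨q, hqM, hqS⟩ := hM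
  have hUopen : IsOpen (Ioo x1 x2 ×ˢ Ioo y1 y2) := isOpen_Ioo.prod isOpen_Ioo
  have hMU : Ioo (x0 - r / 3) (x0 + r / 3) ×ˢ Ioo (y0 - r / 3) (y0 + r / 3) ⊆
      Ioo x1 x2 ×ˢ Ioo y1 y2 :=
    prod_mono (Ioo_subset_Ioo hx1r hx2l) (Ioo_subset_Ioo hy1r hy2l)
  have hposU := hpos _ hUopen ⟨q, hMU hqM, hqS⟩
  have hle0 : μ (Ioo x1 x2 ×ˢ Ioo y1 y2) ≤ μ (Ioc x1 x2 ×ˢ Ioc y1 y2) :=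
    measure_mono (prod_mono Ioo_subset_Ioc_self Ioo_subset_Ioc_self)
  rw [hrect0] at hle0
  exact absurd (le_antisymm hle0 zero_le) (ne_of_gt hposU)
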